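/- The solution to max_π E_{a∼π}[A_r(s,a)] − μ·D_KL(π ‖ π_β) subject to the support constraint ∫_{{a : Q_h(s,a) ≤ 0}} π(a|s) da = 1, with μ > 0, is π*(a|s) ∝ π_β(a|s) exp(A_r(s,a)/μ) · 𝟙[Q_h(s,a) ≤ 0], assuming π_β assigns positive mass to the set {a : Q_h(s,a) ≤ 0}. -/

import Mathlib

open MeasureTheory

/-- The solution of `max_π E_{a∼π}[A_r(a)] − μ·KL(π‖π_β)` subject to the support constraint
`∫_{{a : Q_h(a) ≤ 0}} π(a) da = 1` is
`π*(a) ∝ π_β(a) exp(A_r(a)/μ) 𝟙[Q_h(a) ≤ 0]`, provided `π_β` gives positive mass to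
`{a | Q_h(a) ≤ 0}`: every admissible density has objective value no larger than that of `π*`. -/
theorem stmt9 {α : Type*} [MeasurableSpace α] (μ : Measure α)
    (πβ : α → ℝ) (Ar : α → ℝ) (Qh : α → ℝ) (μt : ℝ) (hμt : 0 < μt)
    (hβmeas : Measurable πβ) (hAmeas : Measurable Ar) (hQmeas : Measurable Qh)
    (hβnn : ∀ a, 0 ≤ πβ a) (hβint : Integrable πβ μ) (hβprob : ∫ a, πβ a ∂μ = 1)
    (hAbdd : ∃ M, ∀ a, |Ar a| ≤ M)
    (hβmass : 0 < ∫ a in {a | Qh a ≤ 0}, πβ a ∂μ)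
    (Z : ℝ)
    (hZ : Z = ∫ a, πβ a * Real.exp (Ar a / μt) * (if Qh a ≤ 0 then (1 : ℝ) else 0) ∂μ)
    (πstar : α → ℝ)
    (hπstar : ∀ a, πstar a
      = πβ a * Real.exp (Ar a / μt) * (if Qh a ≤ 0 then (1 : ℝ) else 0) / Z) :
    ∀ π : α → ℝ, Measurable π → (∀ a, 0 ≤ π a) → Integrable π μ →
      (∫ a, π a ∂μ = 1) → (∫ a in {a | Qh a ≤ 0}, π a ∂μ = 1) →
      (∀ a, πβ a = 0 → π a = 0) →
      Integrable (fun a => π a * Ar a) μ →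
      Integrable (fun a => π a * Real.log (π a / πβ a)) μ →
      (∫ a, π a * Ar a ∂μ) - μt * ∫ a, π a * Real.log (π a / πβ a) ∂μ
        ≤ (∫ a, πstar a * Ar a ∂μ)
          - μt * ∫ a, πstar a * Real.log (πstar a / πβ a) ∂μ := by
  intro π hπmeas hπnn hπint hπprob hπsupp hπac hπArint hπKLint
  obtain ⟨M, hM⟩ := hAbdd
  set s : Set α := {a | Qh a ≤ 0} with hs
  have hsmeas : MeasurableSet s := hQmeas measurableSet_Iic
  set χ : α → ℝ := fun a => if Qh a ≤ 0 then (1:ℝ) else 0 with hχ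
  set g : α → ℝ := fun a => πβ a * Real.exp (Ar a / μt) * χ a with hg
  have hχnn : ∀ a, 0 ≤ χ a := by
    intro a; simp only [hχ]; split <;> norm_num
  have hχle : ∀ a, χ a ≤ 1 := by
    intro a; simp only [hχ]; split <;> norm_num
  have hgnn : ∀ a, 0 ≤ g a := fun a => by
    have := hβnn a; have := (Real.exp_pos (Ar a / μt)).le; have := hχnn a; positivity
  have hχmeas : Measurable χ := by
    apply Measurable.ite (hQmeas measurableSet_Iic) <;> measurability
  have hgmeas : Measurable g :=
    ((hβmeas.mul ((hAmeas.div_const μt).exp)).mul hχmeas)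
  -- g is integrable (bounded multiple of πβ)
  have hgint : Integrable g μ := by
    have : Integrable (fun a => (Real.exp (Ar a / μt) * χ a) * πβ a) μ := by
      apply hβint.bdd_mul (c := Real.exp (M / μt)) ((hAmeas.div_const μt).exp.mul hχmeas).aestronglyMeasurable
      refine Filter.Eventually.of_forall fun a => ?_
      show ‖Real.exp (Ar a / μt) * χ a‖ ≤ _
      rw [Real.norm_eq_abs, abs_mul, abs_of_pos (Real.exp_pos _),
        abs_of_nonneg (hχnn a)]
      calc Real.exp (Ar a / μt) * χ a ≤ Real.exp (Ar a / μt) * 1 := by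
            exact mul_le_mul_of_nonneg_left (hχle a) (Real.exp_pos _).le
        _ = Real.exp (Ar a / μt) := mul_one _
        _ ≤ Real.exp (M / μt) := by
            apply Real.exp_le_exp.mpr
            gcongr
            exact le_of_abs_le (hM a)
    exact this.congr (Filter.EventuallyEq.of_eq (by funext a; ring))
  -- πβ * χ is integrable
  have hβχint : Integrable (fun a => πβ a * χ a) μ := by
    have : Integrable (fun a => χ a * πβ a) μ := by
      apply hβint.bdd_mul (c := 1) hχmeas.aestronglyMeasurable
      exact Filter.Eventually.of_forall fun a => by rw [Real.norm_eq_abs, abs_of_nonneg (hχnn a)]; exact hχle a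
    exact this.congr (Filter.EventuallyEq.of_eq (by funext a; ring))
  -- Z = ∫ g and Z > 0
  have hZint : Z = ∫ a, g a ∂μ := hZ
  have hβχ : ∫ a in s, πβ a ∂μ = ∫ a, πβ a * χ a ∂μ := by
    rw [← integral_indicator hsmeas]
    congr 1; funext a
    by_cases h : a ∈ s
    · simp only [Set.indicator_of_mem h, hχ, if_pos (show Qh a ≤ 0 from h), mul_one]
    · simp only [Set.indicator_of_notMem h, hχ, if_neg (show ¬ Qh a ≤ 0 from h), mul_zero]
  have hZpos : 0 < Z := by
    have hlow : ∀ a, Real.exp (-(M / μt)) * (πβ a * χ a) ≤ g a := by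
      intro a
      simp only [hg]
      by_cases h : Qh a ≤ 0
      · simp only [hχ, if_pos h, mul_one]
        rw [mul_comm]
        apply mul_le_mul_of_nonneg_left _ (hβnn a)
        apply Real.exp_le_exp.mpr
        exact neg_le_of_abs_le (by rw [abs_div, abs_of_pos hμt]; gcongr; exact hM a)
      · simp only [hχ, if_neg h, mul_zero, le_refl]
    have h1 : Real.exp (-(M / μt)) * ∫ a, πβ a * χ a ∂μ ≤ ∫ a, g a ∂μ := by
      rw [← integral_const_mul]
      exact integral_mono (hβχint.const_mul _) hgint hlow
    have h2 : 0 < Real.exp (-(M / μt)) * ∫ a, πβ a * χ a ∂μ := by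
      rw [← hβχ]; positivity
    rw [hZint]; linarith
  -- πstar = g / Z
  have hπstar' : ∀ a, πstar a = g a / Z := fun a => hπstar a
  -- π vanishes a.e. outside s
  have hzero : ∀ᵐ a ∂μ, a ∈ sᶜ → π a = 0 := by
    have hsplit : ∫ a in s, π a ∂μ + ∫ a in sᶜ, π a ∂μ = ∫ a, π a ∂μ :=
      integral_add_compl hsmeas hπint
    have h0 : ∫ a in sᶜ, π a ∂μ = 0 := by
      rw [hπprob] at hsplit
      have := hπsupp
      linarith
    have hae : π =ᵐ[μ.restrict sᶜ] 0 :=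
      (integral_eq_zero_iff_of_nonneg hπnn hπint.restrict).mp h0
    exact (ae_restrict_iff' hsmeas.compl).mp hae
  -- key pointwise inequality (a.e.)
  have key : ∀ᵐ a ∂μ, π a * Ar a - μt * (π a * Real.log (π a / πβ a))
      ≤ μt * (g a / Z - π a) + (μt * Real.log Z) * π a := by
    filter_upwards [hzero] with a ha
    by_cases hπ0 : π a = 0
    · have hgZ : 0 ≤ μt * (g a / Z) := by
        have := hgnn a; positivity
      rw [hπ0]
      nlinarith [hgZ]
    · have hπpos : 0 < π a := lt_of_le_of_ne (hπnn a) (Ne.symm hπ0)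
      have hβpos : 0 < πβ a := by
        rcases lt_or_eq_of_le (hβnn a) with h | h
        · exact h
        · exact absurd (hπac a h.symm) hπ0
      have has : a ∈ s := by
        by_contra h
        exact hπ0 (ha h)
      have hχ1 : χ a = 1 := if_pos (show Qh a ≤ 0 from has)
      have hga : g a = πβ a * Real.exp (Ar a / μt) := by
        simp only [hg, hχ1, mul_one]
      have hgpos : 0 < g a := by rw [hga]; positivity
      have hlog : Real.log (g a / (Z * π a)) ≤ g a / (Z * π a) - 1 :=
        Real.log_le_sub_one_of_pos (by positivity)
      have hexpand : Real.log (g a / (Z * π a))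
          = Ar a / μt - Real.log (π a / πβ a) - Real.log Z := by
        rw [hga, Real.log_div (by positivity) (by positivity),
          Real.log_mul hβpos.ne' (Real.exp_pos _).ne', Real.log_exp,
          Real.log_mul hZpos.ne' hπpos.ne', Real.log_div hπpos.ne' hβpos.ne']
        ring
      have h2 : μt * π a * (Ar a / μt - Real.log (π a / πβ a) - Real.log Z)
          ≤ μt * π a * (g a / (Z * π a) - 1) := by
        rw [← hexpand]
        exact mul_le_mul_of_nonneg_left hlog (by positivity)
      have h3 : μt * π a * (g a / (Z * π a) - 1) = μt * (g a / Z) - μt * π a := by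
        field_simp
      have h4 : μt * π a * (Ar a / μt - Real.log (π a / πβ a) - Real.log Z)
          = π a * Ar a - μt * (π a * Real.log (π a / πβ a)) - μt * Real.log Z * π a := by
        field_simp
      rw [h4, h3] at h2
      linarith
  -- integrate the inequality
  have hLHSint : Integrable (fun a => π a * Ar a - μt * (π a * Real.log (π a / πβ a))) μ :=
    hπArint.sub (hπKLint.const_mul μt)
  have hRHSint : Integrable (fun a => μt * (g a / Z - π a) + (μt * Real.log Z) * π a) μ :=
    (((hgint.div_const Z).sub hπint).const_mul μt).add (hπint.const_mul _)
  have hineq : ∫ a, (π a * Ar a - μt * (π a * Real.log (π a / πβ a))) ∂μ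
      ≤ ∫ a, (μt * (g a / Z - π a) + (μt * Real.log Z) * π a) ∂μ :=
    integral_mono_ae hLHSint hRHSint key
  have hLHSval : ∫ a, (π a * Ar a - μt * (π a * Real.log (π a / πβ a))) ∂μ
      = (∫ a, π a * Ar a ∂μ) - μt * ∫ a, π a * Real.log (π a / πβ a) ∂μ := by
    rw [integral_sub hπArint (hπKLint.const_mul μt), integral_const_mul]
  have hgI : ∫ a, g a ∂μ = Z := hZint.symm
  have hdivint : Integrable (fun a => g a / Z) μ := by
    exact hgint.div_const Z
  have hsubint : Integrable (fun a => g a / Z - π a) μ := by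
    exact hdivint.sub hπint
  have hint3 : Integrable (fun a => μt * (g a / Z - π a)) μ := by
    exact hsubint.const_mul μt
  have hint4 : Integrable (fun a => (μt * Real.log Z) * π a) μ := by
    exact hπint.const_mul _
  have hRHSval : ∫ a, (μt * (g a / Z - π a) + (μt * Real.log Z) * π a) ∂μ
      = μt * Real.log Z := by
    rw [integral_add hint3 hint4, integral_const_mul, integral_const_mul,
      integral_sub hdivint hπint, integral_div, hgI, hπprob,
      div_self hZpos.ne']
    ring
  -- value of the objective at πstar
  have hπstarint : Integrable πstar μ := by
    have := hgint.div_const Z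
    exact this.congr (Filter.EventuallyEq.of_eq (funext fun a => (hπstar' a).symm))
  have hπstarI : ∫ a, πstar a ∂μ = 1 := by
    rw [show (fun a => πstar a) = fun a => g a / Z from funext hπstar',
      integral_div, hgI, div_self hZpos.ne']
  have hπstarnn : ∀ a, 0 ≤ πstar a := fun a => by
    rw [hπstar' a]; exact div_nonneg (hgnn a) hZpos.le
  have hπstarArint : Integrable (fun a => πstar a * Ar a) μ := by
    have : Integrable (fun a => Ar a * πstar a) μ := by
      apply hπstarint.bdd_mul (c := M) hAmeas.aestronglyMeasurable (Filter.Eventually.of_forall fun a => hM a)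
    exact this.congr (Filter.EventuallyEq.of_eq (by funext a; ring))
  have hKLstar : ∀ a, πstar a * Real.log (πstar a / πβ a)
      = πstar a * (Ar a / μt) - Real.log Z * πstar a := by
    intro a
    by_cases hβ0 : πβ a = 0
    · have : πstar a = 0 := by rw [hπstar a, hβ0]; ring
      simp [this]
    · have hβpos : 0 < πβ a := lt_of_le_of_ne (hβnn a) (Ne.symm hβ0)
      by_cases h : Qh a ≤ 0
      · have hps : πstar a = πβ a * Real.exp (Ar a / μt) / Z := by
          rw [hπstar a, if_pos h, mul_one]
        have hpspos : 0 < πstar a := by rw [hps]; positivity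
        have hq : πstar a / πβ a = Real.exp (Ar a / μt) / Z := by
          rw [hps]; field_simp
        rw [hq, Real.log_div (Real.exp_pos _).ne' hZpos.ne', Real.log_exp]
        ring
      · have : πstar a = 0 := by rw [hπstar a, if_neg h]; ring
        simp [this]
  have hKLstarval : μt * ∫ a, πstar a * Real.log (πstar a / πβ a) ∂μ
      = (∫ a, πstar a * Ar a ∂μ) - μt * Real.log Z := by
    have hint1 : Integrable (fun a => πstar a * (Ar a / μt)) μ := by
      have : Integrable (fun a => (πstar a * Ar a) * (1/μt)) μ := hπstarArint.mul_const _
      exact this.congr (Filter.EventuallyEq.of_eq (by funext a; field_simp))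
    have hint2 : Integrable (fun a => Real.log Z * πstar a) μ := hπstarint.const_mul _
    rw [show (fun a => πstar a * Real.log (πstar a / πβ a))
        = fun a => πstar a * (Ar a / μt) - Real.log Z * πstar a from funext hKLstar,
      integral_sub hint1 hint2, integral_const_mul, hπstarI, mul_one]
    have : ∫ a, πstar a * (Ar a / μt) ∂μ = (∫ a, πstar a * Ar a ∂μ) / μt := by
      rw [← integral_div]
      congr 1; funext a; field_simp
    rw [this]
    field_simp
  have hfinal : (∫ a, πstar a * Ar a ∂μ)
      - μt * ∫ a, πstar a * Real.log (πstar a / πβ a) ∂μ = μt * Real.log Z := by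
    rw [hKLstarval]; ring
  rw [hfinal]
  calc (∫ a, π a * Ar a ∂μ) - μt * ∫ a, π a * Real.log (π a / πβ a) ∂μ
      = ∫ a, (π a * Ar a - μt * (π a * Real.log (π a / πβ a))) ∂μ := hLHSval.symm
    _ ≤ ∫ a, (μt * (g a / Z - π a) + (μt * Real.log Z) * π a) ∂μ := hineq
    _ = μt * Real.log Z := hRHSval
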